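/- Suppose Z is independent of Y0 and of Y1, Condition S1 holds, and 0 < p(z_ℓ) < 1 for every ℓ. Let γ = (γ_1,...,γ_L) and γ̃ = (γ̃_1,...,γ̃_L) belong to Γ and suppose that for every y ∈ ℝ: P[Y ≤ y | D=1] ≤ Σ_{ℓ=1}^L γ_ℓ P[Y ≤ y, D=1 | Z=z_ℓ] and Σ_{ℓ=1}^L γ̃_ℓ P[Y ≤ y, D=1 | Z=z_ℓ] ≤ P[Y ≤ y | D=1]. Then for every y ∈ ℝ: −Σ_{ℓ=1}^L γ̃_ℓ P[Y ≤ y, D=0 | Z=z_ℓ] ≤ P[Y0 ≤ y | D=1] ≤ −Σ_{ℓ=1}^L γ_ℓ P[Y ≤ y, D=0 | Z=z_ℓ]. -/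

import Mathlib

open MeasureTheory ProbabilityTheory Filter Set

/-- Probability of an event. -/
noncomputable def pr {Ω : Type*} [MeasurableSpace Ω] (μ : Measure Ω) (s : Set Ω) : ℝ :=
  (μ s).toReal

/-- Conditional probability `P[s | A]`. -/
noncomputable def cpr {Ω : Type*} [MeasurableSpace Ω] (μ : Measure Ω) (s A : Set Ω) : ℝ :=
  pr μ (s ∩ A) / pr μ A

lemma pr_union' {Ω : Type*} [MeasurableSpace Ω] (μ : Measure Ω) [IsFiniteMeasure μ] {s t : Set Ω}
    (hd : Disjoint s t) (ht : MeasurableSet t) : pr μ (s ∪ t) = pr μ s + pr μ t := by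
  rw [pr, measure_union hd ht, ENNReal.toReal_add (measure_ne_top _ _) (measure_ne_top _ _)]; rfl

lemma pr_partition {Ω : Type*} [MeasurableSpace Ω] (μ : Measure Ω) [IsProbabilityMeasure μ]
    {L : ℕ} (Z : Ω → Fin L) (hmZ : Measurable Z) (s : Set Ω) (hs : MeasurableSet s) :
    pr μ s = ∑ ℓ, pr μ (s ∩ {ω | Z ω = ℓ}) := by
  have h1 : s = ⋃ ℓ : Fin L, s ∩ {ω | Z ω = ℓ} := by ext ω; simp
  have hd : Pairwise (Function.onFun Disjoint fun ℓ : Fin L => s ∩ {ω | Z ω = ℓ}) := by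
    intro i j hij
    refine Set.disjoint_left.2 ?_
    rintro ω ⟨-, hi⟩ ⟨-, hj⟩
    exact hij (hi.symm.trans hj)
  have hm : ∀ ℓ : Fin L, MeasurableSet (s ∩ {ω | Z ω = ℓ}) :=
    fun ℓ => hs.inter (hmZ (measurableSet_singleton ℓ))
  rw [pr]
  conv_lhs => rw [h1]
  rw [measure_iUnion hd hm, tsum_fintype,
    ENNReal.toReal_sum (fun ℓ _ => measure_ne_top μ _)]
  rfl

lemma max_add_max_neg (x : ℝ) : max x 0 = x + max (-x) 0 := by
  rcases le_total x 0 with h | h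
  · rw [max_eq_right h, max_eq_left (neg_nonneg.2 h)]; ring
  · rw [max_eq_left h, max_eq_right (neg_nonpos.2 h)]; ring

lemma transfer_lemma {L : ℕ} (F G : ℝ → Fin L → ℝ)
    (condS1 : ∀ w wt : Fin L → ℝ, (∀ ℓ, 0 ≤ w ℓ) → (∀ ℓ, 0 ≤ wt ℓ) →
      (∑ ℓ, w ℓ) = 1 → (∑ ℓ, wt ℓ) = 1 →
      (∀ y : ℝ, (∑ ℓ, w ℓ * F y ℓ) ≤ ∑ ℓ, wt ℓ * F y ℓ) →
      (∀ y : ℝ, (∑ ℓ, w ℓ * G y ℓ) ≤ ∑ ℓ, wt ℓ * G y ℓ))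
    (a b : Fin L → ℝ) (ha : (∑ ℓ, a ℓ) = 1) (hb : (∑ ℓ, b ℓ) = 1)
    (h : ∀ y : ℝ, (∑ ℓ, a ℓ * F y ℓ) ≤ ∑ ℓ, b ℓ * F y ℓ) :
    ∀ y : ℝ, (∑ ℓ, a ℓ * G y ℓ) ≤ ∑ ℓ, b ℓ * G y ℓ := by
  set C : ℝ := 1 + (∑ ℓ, max (-(a ℓ)) 0) + (∑ ℓ, max (-(b ℓ)) 0) with hCdef
  have hsa : 0 ≤ ∑ ℓ, max (-(a ℓ)) 0 := Finset.sum_nonneg fun ℓ _ => le_max_right _ _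
  have hsb : 0 ≤ ∑ ℓ, max (-(b ℓ)) 0 := Finset.sum_nonneg fun ℓ _ => le_max_right _ _
  have hC : 0 < C := by rw [hCdef]; linarith
  set w : Fin L → ℝ := fun ℓ => (max (a ℓ) 0 + max (-(b ℓ)) 0) / C with hwdef
  set wt : Fin L → ℝ := fun ℓ => (max (b ℓ) 0 + max (-(a ℓ)) 0) / C with hwtdef
  have hwpos : ∀ ℓ, 0 ≤ w ℓ := fun ℓ => by
    apply div_nonneg _ hC.le
    have := le_max_right (a ℓ) 0; have := le_max_right (-(b ℓ)) 0; linarith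
  have hwtpos : ∀ ℓ, 0 ≤ wt ℓ := fun ℓ => by
    apply div_nonneg _ hC.le
    have := le_max_right (b ℓ) 0; have := le_max_right (-(a ℓ)) 0; linarith
  have hsum : ∀ c : Fin L → ℝ, (∑ ℓ, c ℓ) = 1 →
      (∑ ℓ, max (c ℓ) 0) = 1 + ∑ ℓ, max (-(c ℓ)) 0 := by
    intro c hc
    calc (∑ ℓ, max (c ℓ) 0) = ∑ ℓ, (c ℓ + max (-(c ℓ)) 0) := by
          exact Finset.sum_congr rfl fun ℓ _ => max_add_max_neg _
      _ = (∑ ℓ, c ℓ) + ∑ ℓ, max (-(c ℓ)) 0 := Finset.sum_add_distrib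
      _ = 1 + ∑ ℓ, max (-(c ℓ)) 0 := by rw [hc]
  have hw1 : (∑ ℓ, w ℓ) = 1 := by
    rw [hwdef]
    rw [← Finset.sum_div, Finset.sum_add_distrib, hsum a ha]
    field_simp [hCdef]
    exact hCdef.symm
  have hwt1 : (∑ ℓ, wt ℓ) = 1 := by
    rw [hwtdef]
    rw [← Finset.sum_div, Finset.sum_add_distrib, hsum b hb]
    field_simp [hCdef]
    ring
  have key : ∀ H : Fin L → ℝ,
      (∑ ℓ, w ℓ * H ℓ) - (∑ ℓ, wt ℓ * H ℓ) = ((∑ ℓ, a ℓ * H ℓ) - ∑ ℓ, b ℓ * H ℓ) / C := by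
    intro H
    rw [← Finset.sum_sub_distrib, ← Finset.sum_sub_distrib, Finset.sum_div]
    refine Finset.sum_congr rfl fun ℓ _ => ?_
    rw [hwdef, hwtdef]
    have h1 := max_add_max_neg (a ℓ)
    have h2 := max_add_max_neg (b ℓ)
    simp only []
    rw [h1, h2]
    ring
  have hiff : ∀ H : Fin L → ℝ,
      ((∑ ℓ, w ℓ * H ℓ) ≤ ∑ ℓ, wt ℓ * H ℓ) ↔ ((∑ ℓ, a ℓ * H ℓ) ≤ ∑ ℓ, b ℓ * H ℓ) := by
    intro H
    rw [← sub_nonpos, key H, ← sub_nonpos (b := ∑ ℓ, b ℓ * H ℓ)]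
    constructor
    · intro hle
      by_contra hcon
      push_neg at hcon
      exact absurd hle (not_le.2 (div_pos hcon hC))
    · intro hle
      exact div_nonpos_of_nonpos_of_nonneg hle hC.le
  have hconc := condS1 w wt hwpos hwtpos hw1 hwt1 (fun y => (hiff (F y)).2 (h y))
  exact fun y => (hiff (G y)).1 (hconc y)

/-- Theorem 1 (bounds on the counterfactual distribution `P[Y₀ ≤ y | D = 1]`). -/
theorem bounds_on_counterfactual_distribution
    {Ω : Type*} [MeasurableSpace Ω] (μ : Measure Ω) [IsProbabilityMeasure μ]
    (L : ℕ) [NeZero L]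
    (Y0 Y1 Y : Ω → ℝ) (D : Ω → ℕ) (Z : Ω → Fin L)
    (hmY0 : Measurable Y0) (hmY1 : Measurable Y1) (hmD : Measurable D) (hmZ : Measurable Z)
    (hD01 : ∀ ω, D ω = 0 ∨ D ω = 1)
    (hYobs : ∀ ω, Y ω = if D ω = 1 then Y1 ω else Y0 ω)
    (hZpos : ∀ ℓ : Fin L, 0 < pr μ {ω | Z ω = ℓ})
    (hposD1 : 0 < pr μ {ω | D ω = 1})
    (hposD1Z : ∀ ℓ : Fin L, 0 < pr μ {ω | D ω = 1 ∧ Z ω = ℓ})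
    (hindep0 : IndepFun Z Y0 μ) (hindep1 : IndepFun Z Y1 μ)
    (p : Fin L → ℝ) (hp : ∀ ℓ, p ℓ = cpr μ {ω | D ω = 1} {ω | Z ω = ℓ})
    (hp01 : ∀ ℓ, 0 < p ℓ ∧ p ℓ < 1)
    -- Condition S₁
    (condS1 : ∀ w wt : Fin L → ℝ, (∀ ℓ, 0 ≤ w ℓ) → (∀ ℓ, 0 ≤ wt ℓ) →
      (∑ ℓ, w ℓ) = 1 → (∑ ℓ, wt ℓ) = 1 →
      (∀ y : ℝ, (∑ ℓ, w ℓ * cpr μ {ω | Y1 ω ≤ y} {ω | D ω = 1 ∧ Z ω = ℓ})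
        ≤ ∑ ℓ, wt ℓ * cpr μ {ω | Y1 ω ≤ y} {ω | D ω = 1 ∧ Z ω = ℓ}) →
      (∀ y : ℝ, (∑ ℓ, w ℓ * cpr μ {ω | Y0 ω ≤ y} {ω | D ω = 1 ∧ Z ω = ℓ})
        ≤ ∑ ℓ, wt ℓ * cpr μ {ω | Y0 ω ≤ y} {ω | D ω = 1 ∧ Z ω = ℓ}))
    -- γ, γ̃ ∈ Γ
    (γ γt : Fin L → ℝ)
    (hγ0 : (∑ ℓ, γ ℓ) = 0) (hγ1 : (∑ ℓ, γ ℓ * p ℓ) = 1)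
    (hγt0 : (∑ ℓ, γt ℓ) = 0) (hγt1 : (∑ ℓ, γt ℓ * p ℓ) = 1)
    -- the rank conditions (2.4) and (2.5)
    (hUB : ∀ y : ℝ, cpr μ {ω | Y ω ≤ y} {ω | D ω = 1}
      ≤ ∑ ℓ, γ ℓ * cpr μ {ω | Y ω ≤ y ∧ D ω = 1} {ω | Z ω = ℓ})
    (hLB : ∀ y : ℝ, (∑ ℓ, γt ℓ * cpr μ {ω | Y ω ≤ y ∧ D ω = 1} {ω | Z ω = ℓ})
      ≤ cpr μ {ω | Y ω ≤ y} {ω | D ω = 1}) :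
    ∀ y : ℝ,
      (-∑ ℓ, γt ℓ * cpr μ {ω | Y ω ≤ y ∧ D ω = 0} {ω | Z ω = ℓ})
          ≤ cpr μ {ω | Y0 ω ≤ y} {ω | D ω = 1} ∧
        cpr μ {ω | Y0 ω ≤ y} {ω | D ω = 1}
          ≤ -∑ ℓ, γ ℓ * cpr μ {ω | Y ω ≤ y ∧ D ω = 0} {ω | Z ω = ℓ} := by
  -- measurability of basic sets
  have mZ : ∀ ℓ : Fin L, MeasurableSet {ω | Z ω = ℓ} :=
    fun ℓ => hmZ (measurableSet_singleton ℓ)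
  have mD1 : MeasurableSet {ω | D ω = 1} := hmD (measurableSet_singleton 1)
  have mDZ : ∀ ℓ : Fin L, MeasurableSet {ω | D ω = 1 ∧ Z ω = ℓ} :=
    fun ℓ => mD1.inter (mZ ℓ)
  have mY1s : ∀ y : ℝ, MeasurableSet {ω | Y1 ω ≤ y} := fun y => hmY1 measurableSet_Iic
  have mY0s : ∀ y : ℝ, MeasurableSet {ω | Y0 ω ≤ y} := fun y => hmY0 measurableSet_Iic
  -- positivity and nonvanishing
  have hqne : ∀ ℓ, pr μ {ω | Z ω = ℓ} ≠ 0 := fun ℓ => (hZpos ℓ).ne'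
  have hq1ne : ∀ ℓ, pr μ {ω | D ω = 1 ∧ Z ω = ℓ} ≠ 0 := fun ℓ => (hposD1Z ℓ).ne'
  have hdne : pr μ {ω | D ω = 1} ≠ 0 := hposD1.ne'
  -- p ℓ = q1 ℓ / q ℓ
  have hpq : ∀ ℓ, p ℓ = pr μ {ω | D ω = 1 ∧ Z ω = ℓ} / pr μ {ω | Z ω = ℓ} := by
    intro ℓ; rw [hp ℓ]; rfl
  -- set identities
  have E1 : ∀ (y : ℝ) (ℓ : Fin L), {ω | Y ω ≤ y ∧ D ω = 1} ∩ {ω | Z ω = ℓ}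
      = {ω | Y1 ω ≤ y} ∩ {ω | D ω = 1 ∧ Z ω = ℓ} := by
    intro y ℓ
    ext ω
    simp only [Set.mem_inter_iff, Set.mem_setOf_eq, hYobs ω]
    rcases hD01 ω with h | h <;> simp [h] <;> tauto
  have E2 : ∀ y : ℝ, {ω | Y ω ≤ y} ∩ {ω | D ω = 1} = {ω | Y1 ω ≤ y} ∩ {ω | D ω = 1} := by
    intro y
    ext ω
    simp only [Set.mem_inter_iff, Set.mem_setOf_eq, hYobs ω]
    rcases hD01 ω with h | h <;> simp [h]
  have E3 : ∀ (y : ℝ) (ℓ : Fin L), {ω | Y0 ω ≤ y} ∩ {ω | Z ω = ℓ}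
      = ({ω | Y ω ≤ y ∧ D ω = 0} ∩ {ω | Z ω = ℓ})
        ∪ ({ω | Y0 ω ≤ y} ∩ {ω | D ω = 1 ∧ Z ω = ℓ}) := by
    intro y ℓ
    ext ω
    simp only [Set.mem_union, Set.mem_inter_iff, Set.mem_setOf_eq, hYobs ω]
    rcases hD01 ω with h | h <;> simp [h] <;> tauto
  have E3d : ∀ (y : ℝ) (ℓ : Fin L), Disjoint ({ω | Y ω ≤ y ∧ D ω = 0} ∩ {ω | Z ω = ℓ})
      ({ω | Y0 ω ≤ y} ∩ {ω | D ω = 1 ∧ Z ω = ℓ}) := by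
    intro y ℓ
    refine Set.disjoint_left.2 ?_
    rintro ω ⟨⟨-, h0⟩, -⟩ ⟨-, h1, -⟩
    rw [h0] at h1
    exact absurd h1 (by norm_num)
  -- independence
  have Eind : ∀ (y : ℝ) (ℓ : Fin L), pr μ ({ω | Y0 ω ≤ y} ∩ {ω | Z ω = ℓ})
      = pr μ {ω | Y0 ω ≤ y} * pr μ {ω | Z ω = ℓ} := by
    intro y ℓ
    have h := hindep0.measure_inter_preimage_eq_mul {ℓ} (Set.Iic y)
      (measurableSet_singleton ℓ) measurableSet_Iic
    have hset : Z ⁻¹' {ℓ} ∩ Y0 ⁻¹' Set.Iic y = {ω | Y0 ω ≤ y} ∩ {ω | Z ω = ℓ} := by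
      ext ω; simp [Set.mem_preimage, and_comm]
    rw [hset] at h
    rw [pr, h, ENNReal.toReal_mul, mul_comm]
    rfl
  -- partitions over Z
  have Pd : pr μ {ω | D ω = 1} = ∑ ℓ, pr μ {ω | D ω = 1 ∧ Z ω = ℓ} := by
    rw [pr_partition μ Z hmZ _ mD1]
    rfl
  have P1 : ∀ y : ℝ, pr μ ({ω | Y1 ω ≤ y} ∩ {ω | D ω = 1})
      = ∑ ℓ, pr μ ({ω | Y1 ω ≤ y} ∩ {ω | D ω = 1 ∧ Z ω = ℓ}) := by
    intro y
    rw [pr_partition μ Z hmZ _ ((mY1s y).inter mD1)]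
    simp only [Set.inter_assoc]
    rfl
  have P0 : ∀ y : ℝ, pr μ ({ω | Y0 ω ≤ y} ∩ {ω | D ω = 1})
      = ∑ ℓ, pr μ ({ω | Y0 ω ≤ y} ∩ {ω | D ω = 1 ∧ Z ω = ℓ}) := by
    intro y
    rw [pr_partition μ Z hmZ _ ((mY0s y).inter mD1)]
    simp only [Set.inter_assoc]
    rfl
  -- L1 : cpr (Y≤y ∧ D=1) (Z=ℓ) = p ℓ * F1
  have L1 : ∀ (y : ℝ) (ℓ : Fin L), cpr μ {ω | Y ω ≤ y ∧ D ω = 1} {ω | Z ω = ℓ}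
      = p ℓ * cpr μ {ω | Y1 ω ≤ y} {ω | D ω = 1 ∧ Z ω = ℓ} := by
    intro y ℓ
    rw [cpr, cpr, E1 y ℓ, hpq ℓ]
    field_simp [hqne ℓ, hq1ne ℓ]
  -- L2 : cpr (Y≤y) (D=1) = ∑ π F1
  have L2 : ∀ y : ℝ, cpr μ {ω | Y ω ≤ y} {ω | D ω = 1}
      = ∑ ℓ, (pr μ {ω | D ω = 1 ∧ Z ω = ℓ} / pr μ {ω | D ω = 1})
          * cpr μ {ω | Y1 ω ≤ y} {ω | D ω = 1 ∧ Z ω = ℓ} := by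
    intro y
    rw [cpr, E2 y, P1 y, Finset.sum_div]
    refine Finset.sum_congr rfl fun ℓ _ => ?_
    rw [cpr]
    field_simp [hdne, hq1ne ℓ]
  -- L3 : cpr (Y0≤y) (D=1) = ∑ π G0
  have L3 : ∀ y : ℝ, cpr μ {ω | Y0 ω ≤ y} {ω | D ω = 1}
      = ∑ ℓ, (pr μ {ω | D ω = 1 ∧ Z ω = ℓ} / pr μ {ω | D ω = 1})
          * cpr μ {ω | Y0 ω ≤ y} {ω | D ω = 1 ∧ Z ω = ℓ} := by
    intro y
    rw [cpr, P0 y, Finset.sum_div]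
    refine Finset.sum_congr rfl fun ℓ _ => ?_
    rw [cpr]
    field_simp [hdne, hq1ne ℓ]
  -- L4 : p ℓ * G0 = pr(Y0≤y) - cpr (Y≤y ∧ D=0) (Z=ℓ)
  have L4 : ∀ (y : ℝ) (ℓ : Fin L), p ℓ * cpr μ {ω | Y0 ω ≤ y} {ω | D ω = 1 ∧ Z ω = ℓ}
      = pr μ {ω | Y0 ω ≤ y} - cpr μ {ω | Y ω ≤ y ∧ D ω = 0} {ω | Z ω = ℓ} := by
    intro y ℓ
    have hsplit : pr μ {ω | Y0 ω ≤ y} * pr μ {ω | Z ω = ℓ}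
        = pr μ ({ω | Y ω ≤ y ∧ D ω = 0} ∩ {ω | Z ω = ℓ})
          + pr μ ({ω | Y0 ω ≤ y} ∩ {ω | D ω = 1 ∧ Z ω = ℓ}) := by
      rw [← Eind y ℓ, E3 y ℓ, pr_union' μ (E3d y ℓ) ((mY0s y).inter (mDZ ℓ))]
    rw [cpr, cpr, hpq ℓ, div_mul_div_comm,
      mul_comm (pr μ {ω | D ω = 1 ∧ Z ω = ℓ}) (pr μ ({ω | Y0 ω ≤ y} ∩ {ω | D ω = 1 ∧ Z ω = ℓ})),
      mul_div_mul_right _ _ (hq1ne ℓ), eq_sub_iff_add_eq, ← add_div,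
      div_eq_iff (hqne ℓ)]
    linarith [hsplit]
  -- π sums to one
  have hπ1 : (∑ ℓ, pr μ {ω | D ω = 1 ∧ Z ω = ℓ} / pr μ {ω | D ω = 1}) = 1 := by
    rw [← Finset.sum_div, ← Pd, div_self hdne]
  -- sum identity for coefficients summing to zero
  have L5 : ∀ (c : Fin L → ℝ), (∑ ℓ, c ℓ) = 0 → ∀ y : ℝ,
      (∑ ℓ, (c ℓ * p ℓ) * cpr μ {ω | Y0 ω ≤ y} {ω | D ω = 1 ∧ Z ω = ℓ})
        = -∑ ℓ, c ℓ * cpr μ {ω | Y ω ≤ y ∧ D ω = 0} {ω | Z ω = ℓ} := by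
    intro c hc y
    have hterm : ∀ ℓ : Fin L, (c ℓ * p ℓ) * cpr μ {ω | Y0 ω ≤ y} {ω | D ω = 1 ∧ Z ω = ℓ}
        = c ℓ * pr μ {ω | Y0 ω ≤ y} - c ℓ * cpr μ {ω | Y ω ≤ y ∧ D ω = 0} {ω | Z ω = ℓ} := by
      intro ℓ
      rw [mul_assoc, L4 y ℓ]
      ring
    rw [Finset.sum_congr rfl fun ℓ _ => hterm ℓ, Finset.sum_sub_distrib,
      ← Finset.sum_mul, hc, zero_mul, zero_sub]
  -- rewrite rank conditions
  have hUB' : ∀ y : ℝ,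
      (∑ ℓ, (pr μ {ω | D ω = 1 ∧ Z ω = ℓ} / pr μ {ω | D ω = 1})
        * cpr μ {ω | Y1 ω ≤ y} {ω | D ω = 1 ∧ Z ω = ℓ})
      ≤ ∑ ℓ, (γ ℓ * p ℓ) * cpr μ {ω | Y1 ω ≤ y} {ω | D ω = 1 ∧ Z ω = ℓ} := by
    intro y
    have h := hUB y
    rw [L2 y] at h
    refine h.trans_eq (Finset.sum_congr rfl fun ℓ _ => ?_)
    rw [L1 y ℓ, mul_assoc]
  have hLB' : ∀ y : ℝ,
      (∑ ℓ, (γt ℓ * p ℓ) * cpr μ {ω | Y1 ω ≤ y} {ω | D ω = 1 ∧ Z ω = ℓ})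
      ≤ ∑ ℓ, (pr μ {ω | D ω = 1 ∧ Z ω = ℓ} / pr μ {ω | D ω = 1})
        * cpr μ {ω | Y1 ω ≤ y} {ω | D ω = 1 ∧ Z ω = ℓ} := by
    intro y
    have h := hLB y
    rw [L2 y] at h
    refine le_trans (le_of_eq ?_) h
    refine Finset.sum_congr rfl fun ℓ _ => ?_
    rw [L1 y ℓ, mul_assoc]
  -- apply the S1 transfer
  have hUBG := transfer_lemma
    (fun y ℓ => cpr μ {ω | Y1 ω ≤ y} {ω | D ω = 1 ∧ Z ω = ℓ})
    (fun y ℓ => cpr μ {ω | Y0 ω ≤ y} {ω | D ω = 1 ∧ Z ω = ℓ})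
    condS1
    (fun ℓ => pr μ {ω | D ω = 1 ∧ Z ω = ℓ} / pr μ {ω | D ω = 1})
    (fun ℓ => γ ℓ * p ℓ) hπ1 hγ1 hUB'
  have hLBG := transfer_lemma
    (fun y ℓ => cpr μ {ω | Y1 ω ≤ y} {ω | D ω = 1 ∧ Z ω = ℓ})
    (fun y ℓ => cpr μ {ω | Y0 ω ≤ y} {ω | D ω = 1 ∧ Z ω = ℓ})
    condS1
    (fun ℓ => γt ℓ * p ℓ)
    (fun ℓ => pr μ {ω | D ω = 1 ∧ Z ω = ℓ} / pr μ {ω | D ω = 1})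
    hγt1 hπ1 hLB'
  intro y
  constructor
  · have h := hLBG y
    rw [L5 γt hγt0 y] at h
    exact h.trans_eq (L3 y).symm
  · have h := hUBG y
    rw [L5 γ hγ0 y] at h
    exact (L3 y).trans_le h
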